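/- For a graph G of order n, the corona product G ∘ K_1 (attaching one pendant vertex to each vertex of G) satisfies γ_{R2}(G ∘ K_1) = n + γ(G). -/

import Mathlib

open Finset Classical in
/-- The Roman `{2}`-domination number of a finite graph: the minimum weight of a
function `f : V → {0,1,2}` such that every vertex `v` with `f v = 0` satisfies
`∑_{u ∈ N(v)} f u ≥ 2`. -/
noncomputable def roman2 {V : Type*} [Fintype V] (G : SimpleGraph V) : ℕ :=
  sInf {w | ∃ f : V → ℕ, (∀ v, f v ≤ 2) ∧
    (∀ v, f v = 0 → 2 ≤ ∑ u ∈ Finset.univ.filter (fun u => G.Adj v u), f u) ∧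
    w = ∑ v, f v}

open Finset Classical in
/-- The domination number. -/
noncomputable def domNum {V : Type*} [Fintype V] (G : SimpleGraph V) : ℕ :=
  sInf {k | ∃ S : Finset V, S.card = k ∧ ∀ v, v ∉ S → ∃ u ∈ S, G.Adj u v}

open Finset Classical in
/-- The 2-domination number. -/
noncomputable def twoDomNum {V : Type*} [Fintype V] (G : SimpleGraph V) : ℕ :=
  sInf {k | ∃ S : Finset V, S.card = k ∧
    ∀ v, v ∉ S → 2 ≤ (S.filter (fun u => G.Adj u v)).card}


/-- The corona `G ∘ H`: one copy of `H` for each vertex of `G`, with vertex `a` of `G`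
joined to every vertex of its copy of `H`. -/
def corona {α β : Type*} (G : SimpleGraph α) (H : SimpleGraph β) :
    SimpleGraph (α ⊕ α × β) where
  Adj x y := match x, y with
    | Sum.inl a, Sum.inl b => G.Adj a b
    | Sum.inl a, Sum.inr (b, _) => a = b
    | Sum.inr (a, _), Sum.inl b => a = b
    | Sum.inr (a, w), Sum.inr (b, w') => a = b ∧ H.Adj w w'
  symm := by
    constructor
    rintro (a|⟨a,w⟩) (b|⟨b,w'⟩) h <;> simp_all [SimpleGraph.adj_comm, eq_comm]
  loopless := by
    constructor
    rintro (a|⟨a,w⟩) h <;> simp_all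

open Finset Classical

lemma leaf_nbr_sum {V : Type*} [Fintype V] (G : SimpleGraph V)
    (f : (V ⊕ V × Fin 1) → ℕ) (v : V) (i : Fin 1) :
    ∑ u ∈ Finset.univ.filter (fun u => (corona G (⊥ : SimpleGraph (Fin 1))).Adj (Sum.inr (v, i)) u), f u
      = f (Sum.inl v) := by
  rw [Finset.sum_filter, Fintype.sum_sum_type]
  simp [corona, Fintype.sum_prod_type, Finset.sum_ite_eq]

lemma inl_nbr_sum {V : Type*} [Fintype V] (G : SimpleGraph V)
    (f : (V ⊕ V × Fin 1) → ℕ) (v : V) :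
    ∑ u ∈ Finset.univ.filter (fun u => (corona G (⊥ : SimpleGraph (Fin 1))).Adj (Sum.inl v) u), f u
      = (∑ b ∈ Finset.univ.filter (fun b => G.Adj v b), f (Sum.inl b)) + f (Sum.inr (v, 0)) := by
  rw [Finset.sum_filter, Fintype.sum_sum_type, Finset.sum_filter]
  simp [corona, Fintype.sum_prod_type, Finset.sum_ite_eq, Fin.sum_univ_one]

lemma total_sum {V : Type*} [Fintype V]
    (f : (V ⊕ V × Fin 1) → ℕ) :
    ∑ x, f x = ∑ v : V, (f (Sum.inl v) + f (Sum.inr (v, 0))) := by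
  rw [Fintype.sum_sum_type, Fintype.sum_prod_type]
  simp [Finset.sum_add_distrib, Fin.sum_univ_one]

theorem roman2_corona_K1 {V : Type*} [Fintype V] (G : SimpleGraph V) :
    roman2 (corona G (⊥ : SimpleGraph (Fin 1))) = Fintype.card V + domNum G := by
  classical
  -- a minimum dominating set
  have hdomne : {k | ∃ S : Finset V, S.card = k ∧ ∀ v, v ∉ S → ∃ u ∈ S, G.Adj u v}.Nonempty :=
    ⟨Fintype.card V, Finset.univ, by simp, by simp⟩
  have hmem : domNum G ∈ {k | ∃ S : Finset V, S.card = k ∧ ∀ v, v ∉ S → ∃ u ∈ S, G.Adj u v} :=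
    Nat.sInf_mem hdomne
  obtain ⟨S, hScard, hSdom⟩ := hmem
  -- upper bound witness
  set F : (V ⊕ V × Fin 1) → ℕ := fun x => match x with
    | Sum.inl v => if v ∈ S then 2 else 0
    | Sum.inr (v, _) => if v ∈ S then 0 else 1 with hF
  have hub : (Fintype.card V + domNum G) ∈
      {w | ∃ f : (V ⊕ V × Fin 1) → ℕ, (∀ v, f v ≤ 2) ∧
        (∀ v, f v = 0 → 2 ≤ ∑ u ∈ Finset.univ.filter
          (fun u => (corona G (⊥ : SimpleGraph (Fin 1))).Adj v u), f u) ∧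
        w = ∑ v, f v} := by
    refine ⟨F, ?_, ?_, ?_⟩
    · rintro (v | ⟨v, i⟩) <;> simp [hF] <;> split_ifs <;> omega
    · rintro (v | ⟨v, i⟩) h0
      · have hvS : v ∉ S := by by_contra h; simp [hF, h] at h0
        rw [inl_nbr_sum]
        obtain ⟨u, huS, hadj⟩ := hSdom v hvS
        have hu2 : (2 : ℕ) ≤ ∑ b ∈ Finset.univ.filter (fun b => G.Adj v b), F (Sum.inl b) := by
          have := Finset.single_le_sum (f := fun b => F (Sum.inl b))
            (fun b _ => Nat.zero_le _) (show u ∈ Finset.univ.filter (fun b => G.Adj v b) by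
              simp [hadj.symm])
          simpa [hF, huS] using this
        omega
      · have hvS : v ∈ S := by by_contra h; simp [hF, h] at h0
        rw [leaf_nbr_sum]
        simp [hF, hvS]
    · rw [total_sum]
      have : ∀ v : V, F (Sum.inl v) + F (Sum.inr (v, 0)) = 1 + (if v ∈ S then 1 else 0) := by
        intro v; simp only [hF]; split_ifs <;> rfl
      rw [Finset.sum_congr rfl (fun v _ => this v), Finset.sum_add_distrib]
      simp [Finset.sum_boole, Finset.filter_mem_eq_inter, hScard]
  -- lower bound
  have hlb : ∀ w ∈ {w | ∃ f : (V ⊕ V × Fin 1) → ℕ, (∀ v, f v ≤ 2) ∧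
        (∀ v, f v = 0 → 2 ≤ ∑ u ∈ Finset.univ.filter
          (fun u => (corona G (⊥ : SimpleGraph (Fin 1))).Adj v u), f u) ∧
        w = ∑ v, f v}, Fintype.card V + domNum G ≤ w := by
    rintro w ⟨f, hf2, hfc, rfl⟩
    have key : ∀ v : V, f (Sum.inr (v, 0)) = 0 → 2 ≤ f (Sum.inl v) := by
      intro v h
      have := hfc (Sum.inr (v, 0)) h
      rwa [leaf_nbr_sum] at this
    set T : Finset V := Finset.univ.filter
      (fun v => 2 ≤ f (Sum.inl v) + f (Sum.inr (v, 0))) with hT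
    have hTdom : ∀ v, v ∉ T → ∃ u ∈ T, G.Adj u v := by
      intro v hv
      have hv' : f (Sum.inl v) + f (Sum.inr (v, 0)) < 2 := by
        by_contra h; exact hv (by simp [hT]; omega)
      have hleaf : f (Sum.inr (v, 0)) ≠ 0 := by
        intro h; have := key v h; omega
      have hinl0 : f (Sum.inl v) = 0 := by omega
      have h2 := hfc (Sum.inl v) hinl0
      rw [inl_nbr_sum] at h2
      have hsum : ∑ b ∈ Finset.univ.filter (fun b => G.Adj v b), f (Sum.inl b) ≠ 0 := by omega
      obtain ⟨u, hu, hfu⟩ := Finset.exists_ne_zero_of_sum_ne_zero hsum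
      have huadj : G.Adj v u := (Finset.mem_filter.mp hu).2
      refine ⟨u, ?_, huadj.symm⟩
      simp only [hT, Finset.mem_filter, Finset.mem_univ, true_and]
      by_cases h0 : f (Sum.inr (u, 0)) = 0
      · have := key u h0; omega
      · omega
    have hdomle : domNum G ≤ T.card := Nat.sInf_le ⟨T, rfl, hTdom⟩
    have hc : ∀ v ∈ Finset.univ, (if v ∈ T then 2 else 1) ≤ f (Sum.inl v) + f (Sum.inr (v, 0)) := by
      intro v _
      split_ifs with h
      · exact (Finset.mem_filter.mp h).2
      · by_cases h0 : f (Sum.inr (v, 0)) = 0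
        · have := key v h0; omega
        · omega
    have hsum := Finset.sum_le_sum hc
    have heq : ∑ v : V, (if v ∈ T then 2 else 1) = Fintype.card V + T.card := by
      have : ∀ v : V, (if v ∈ T then 2 else 1) = 1 + (if v ∈ T then 1 else 0) := by
        intro v; split_ifs <;> rfl
      rw [Finset.sum_congr rfl (fun v _ => this v), Finset.sum_add_distrib]
      simp [Finset.sum_boole, Finset.filter_mem_eq_inter]
    rw [total_sum]
    omega
  refine le_antisymm (Nat.sInf_le hub) (le_csInf ⟨_, hub⟩ hlb)
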